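/- arXiv:1906.10541 — 2 statements merged into one kernel-verified Lean document; each statement's English description precedes it below -/
import Mathlib

section
/- Let A be an n×n real tridiagonal matrix (A_{j,i} = 0 whenever |j-i| > 1), let ρ = max_{j,i} |A_{j,i}|, and let C > 0. Then |(e^A)_{j,i}| ≤ e^{-C|j-i|} · e^{(e^C + e^{-C} + 1)ρ} for all j, i. -/
noncomputable section
open Real

attribute [local instance] Matrix.linftyOpNormedAddCommGroup Matrix.linftyOpNormedRing
  Matrix.linftyOpNormedAlgebra

open NormedSpace in
private lemma my_norm_exp_le {𝔸 : Type*} [NormedRing 𝔸] [NormOneClass 𝔸] [NormedAlgebra ℝ 𝔸]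
    [CompleteSpace 𝔸] (x : 𝔸) : ‖exp x‖ ≤ Real.exp ‖x‖ := by
  rw [exp_eq_tsum ℝ]
  refine (norm_tsum_le_tsum_norm (norm_expSeries_summable' (𝕂 := ℝ) x)).trans ?_
  have h : ∀ k : ℕ, ‖((k.factorial : ℝ))⁻¹ • x ^ k‖ ≤ ‖x‖ ^ k / k.factorial := by
    intro k
    calc ‖((k.factorial : ℝ))⁻¹ • x ^ k‖ ≤ ‖((k.factorial : ℝ))⁻¹‖ * ‖x ^ k‖ :=
          _root_.norm_smul_le _ _
      _ ≤ ((k.factorial : ℝ))⁻¹ * ‖x‖ ^ k := by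
          rw [Real.norm_eq_abs, abs_of_nonneg (by positivity)]
          exact mul_le_mul_of_nonneg_left (norm_pow_le _ k) (by positivity)
      _ = ‖x‖ ^ k / k.factorial := by rw [div_eq_inv_mul]
  refine (Summable.tsum_le_tsum h (norm_expSeries_summable' (𝕂 := ℝ) x) (Real.summable_pow_div_factorial _)).trans ?_
  rw [Real.exp_eq_exp_ℝ, exp_eq_tsum_div]

private lemma my_entry_le_norm {n : ℕ} (M : Matrix (Fin n) (Fin n) ℝ) (j i : Fin n) :
    |M j i| ≤ ‖M‖ := by
  have h1 : ‖M j i‖₊ ≤ ∑ k, ‖M j k‖₊ :=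
    Finset.single_le_sum (f := fun k => ‖M j k‖₊) (fun _ _ => zero_le) (Finset.mem_univ i)
  have h2 : (∑ k, ‖M j k‖₊) ≤ ‖M‖₊ := by
    rw [Matrix.linfty_opNNNorm_def]
    exact Finset.le_sup (f := fun j => ∑ k, ‖M j k‖₊) (Finset.mem_univ j)
  exact_mod_cast h1.trans h2

private lemma my_norm_le_of_rows {n : ℕ} (M : Matrix (Fin n) (Fin n) ℝ) {K : ℝ} (hK : 0 ≤ K)
    (h : ∀ j, ∑ i, |M j i| ≤ K) : ‖M‖ ≤ K := by
  rw [Matrix.linfty_opNorm_def, ← Real.coe_toNNReal K hK]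
  refine NNReal.coe_le_coe.mpr (Finset.sup_le fun j _ => ?_)
  rw [← NNReal.coe_le_coe, Real.coe_toNNReal K hK, NNReal.coe_sum]
  simpa [coe_nnnorm, Real.norm_eq_abs] using h j

private lemma my_sum_ite_le {α : Type*} [Fintype α] (P : α → Prop) [DecidablePred P]
    (h : ∀ a b, P a → P b → a = b) {c : ℝ} (hc : 0 ≤ c) :
    ∑ a, (if P a then c else 0) ≤ c := by
  classical
  rw [← Finset.sum_filter, Finset.sum_const, nsmul_eq_mul]
  have hcard : (Finset.univ.filter P).card ≤ 1 :=
    Finset.card_le_one.mpr fun a ha b hb =>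
      h a b (Finset.mem_filter.mp ha).2 (Finset.mem_filter.mp hb).2
  calc ((Finset.univ.filter P).card : ℝ) * c ≤ 1 * c := by
        apply mul_le_mul_of_nonneg_right _ hc; exact_mod_cast hcard
    _ = c := one_mul c

open NormedSpace in
private lemma my_aux {n : ℕ} [NeZero n] (A : Matrix (Fin n) (Fin n) ℝ)
    (hA : ∀ j i : Fin n, 1 < (((j : ℕ) : ℤ) - ((i : ℕ) : ℤ)).natAbs → A j i = 0)
    (ρ : ℝ) (hρA : ∀ a b : Fin n, |A a b| ≤ ρ) (hρ0 : 0 ≤ ρ) (s : ℝ) (j i : Fin n) :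
    |(exp A) j i| ≤
      Real.exp (-(s * ((j : ℕ) : ℝ)) + s * ((i : ℕ) : ℝ))
        * Real.exp ((Real.exp s + Real.exp (-s) + 1) * ρ) := by
  classical
  set D : Matrix (Fin n) (Fin n) ℝ := Matrix.diagonal fun k : Fin n => Real.exp (s * k) with hD
  set E : Matrix (Fin n) (Fin n) ℝ := Matrix.diagonal fun k : Fin n => Real.exp (-(s * k)) with hE
  have hDE : D * E = 1 := by
    rw [hD, hE, Matrix.diagonal_mul_diagonal]
    convert Matrix.diagonal_one
    rw [← Real.exp_add]; simp
  have hED : E * D = 1 := by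
    rw [hE, hD, Matrix.diagonal_mul_diagonal]
    convert Matrix.diagonal_one
    rw [← Real.exp_add]; simp
  set B : Matrix (Fin n) (Fin n) ℝ := D * A * E with hB
  have hBent : ∀ a b : Fin n, B a b = Real.exp (s * a) * A a b * Real.exp (-(s * b)) := by
    intro a b
    rw [hB, hD, hE, Matrix.mul_diagonal, Matrix.diagonal_mul]
  -- row sums of B
  have hK0 : 0 ≤ (Real.exp s + Real.exp (-s) + 1) * ρ := by positivity
  have hrow : ∀ a : Fin n, ∑ b, |B a b| ≤ (Real.exp s + Real.exp (-s) + 1) * ρ := by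
    intro a
    have hpt : ∀ b : Fin n, |B a b| ≤
        (if ((b : ℕ) + 1 = (a : ℕ)) then Real.exp s * ρ else 0)
        + (if b = a then ρ else 0)
        + (if ((a : ℕ) + 1 = (b : ℕ)) then Real.exp (-s) * ρ else 0) := by
      intro b
      have habs : |B a b| = Real.exp (s * ((a : ℕ) : ℝ) - s * ((b : ℕ) : ℝ)) * |A a b| := by
        rw [hBent a b, abs_mul, abs_mul, abs_of_pos (Real.exp_pos _),
          abs_of_pos (Real.exp_pos _), Real.exp_sub, Real.exp_neg]
        ring
      have h2nn : 0 ≤ (if b = a then ρ else 0) := by split_ifs <;> simp [hρ0]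
      have h3nn : 0 ≤ (if ((a : ℕ) + 1 = (b : ℕ)) then Real.exp (-s) * ρ else 0) := by
        split_ifs <;> positivity
      have h1nn : 0 ≤ (if ((b : ℕ) + 1 = (a : ℕ)) then Real.exp s * ρ else 0) := by
        split_ifs <;> positivity
      by_cases h1 : (b : ℕ) + 1 = (a : ℕ)
      · have hcast : ((a : ℕ) : ℝ) = ((b : ℕ) : ℝ) + 1 := by exact_mod_cast h1.symm
        have : |B a b| ≤ Real.exp s * ρ := by
          rw [habs, hcast]
          have : s * (((b : ℕ) : ℝ) + 1) - s * ((b : ℕ) : ℝ) = s := by ring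
          rw [this]
          exact mul_le_mul_of_nonneg_left (hρA a b) (Real.exp_pos s).le
        rw [if_pos h1]; linarith
      · by_cases h2 : b = a
        · have : |B a b| ≤ ρ := by
            rw [habs, h2, sub_self, Real.exp_zero, one_mul]
            exact hρA a a
          rw [if_pos h2]; linarith
        · by_cases h3 : (a : ℕ) + 1 = (b : ℕ)
          · have hcast : ((b : ℕ) : ℝ) = ((a : ℕ) : ℝ) + 1 := by exact_mod_cast h3.symm
            have : |B a b| ≤ Real.exp (-s) * ρ := by
              rw [habs, hcast]
              have : s * ((a : ℕ) : ℝ) - s * (((a : ℕ) : ℝ) + 1) = -s := by ring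
              rw [this]
              exact mul_le_mul_of_nonneg_left (hρA a b) (Real.exp_pos _).le
            rw [if_pos h3]; linarith
          · have hz : A a b = 0 := by
              apply hA
              have hne : (a : ℕ) ≠ (b : ℕ) := fun h => h2 (Fin.ext h.symm)
              omega
            rw [habs, hz, abs_zero, mul_zero]
            linarith
    calc ∑ b, |B a b| ≤ ∑ b : Fin n, ((if ((b : ℕ) + 1 = (a : ℕ)) then Real.exp s * ρ else 0)
          + (if b = a then ρ else 0)
          + (if ((a : ℕ) + 1 = (b : ℕ)) then Real.exp (-s) * ρ else 0)) :=
        Finset.sum_le_sum fun b _ => hpt b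
      _ = (∑ b : Fin n, (if ((b : ℕ) + 1 = (a : ℕ)) then Real.exp s * ρ else 0))
          + (∑ b : Fin n, (if b = a then ρ else 0))
          + (∑ b : Fin n, (if ((a : ℕ) + 1 = (b : ℕ)) then Real.exp (-s) * ρ else 0)) := by
        rw [Finset.sum_add_distrib, Finset.sum_add_distrib]
      _ ≤ Real.exp s * ρ + ρ + Real.exp (-s) * ρ := by
        have t1 := my_sum_ite_le (fun b : Fin n => (b : ℕ) + 1 = (a : ℕ))
          (fun x y hx hy => Fin.ext (by omega)) (by positivity : (0:ℝ) ≤ Real.exp s * ρ)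
        have t2 := my_sum_ite_le (fun b : Fin n => b = a)
          (fun x y hx hy => hx.trans hy.symm) hρ0
        have t3 := my_sum_ite_le (fun b : Fin n => (a : ℕ) + 1 = (b : ℕ))
          (fun x y hx hy => Fin.ext (by omega)) (by positivity : (0:ℝ) ≤ Real.exp (-s) * ρ)
        linarith
      _ = (Real.exp s + Real.exp (-s) + 1) * ρ := by ring
  have hnB : ‖B‖ ≤ (Real.exp s + Real.exp (-s) + 1) * ρ := my_norm_le_of_rows B hK0 hrow
  -- conjugation
  have hUnit : IsUnit D := ⟨⟨D, E, hDE, hED⟩, rfl⟩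
  have hinv : D⁻¹ = E := Matrix.inv_eq_right_inv hDE
  have hconj : exp B = D * exp A * E := by
    rw [hB, ← hinv, Matrix.exp_conj D A hUnit, hinv]
  have hent : (exp B) j i = Real.exp (s * j) * (exp A) j i * Real.exp (-(s * i)) := by
    rw [hconj, hD, hE, Matrix.mul_diagonal, Matrix.diagonal_mul]
  have hsolve : (exp A) j i
      = Real.exp (-(s * j)) * (exp B) j i * Real.exp (s * i) := by
    rw [hent]
    rw [Real.exp_neg, Real.exp_neg]
    field_simp
  have hnorm : ‖exp B‖ ≤ Real.exp ((Real.exp s + Real.exp (-s) + 1) * ρ) :=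
    (my_norm_exp_le B).trans (Real.exp_le_exp.mpr hnB)
  have hentB : |(exp B) j i| ≤ Real.exp ((Real.exp s + Real.exp (-s) + 1) * ρ) :=
    (my_entry_le_norm _ j i).trans hnorm
  calc |(exp A) j i|
      = Real.exp (-(s * j)) * |(exp B) j i| * Real.exp (s * i) := by
        rw [hsolve, abs_mul, abs_mul, abs_of_pos (Real.exp_pos _), abs_of_pos (Real.exp_pos _)]
    _ ≤ Real.exp (-(s * j)) * Real.exp ((Real.exp s + Real.exp (-s) + 1) * ρ)
          * Real.exp (s * i) := by
        apply mul_le_mul_of_nonneg_right _ (Real.exp_pos _).le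
        exact mul_le_mul_of_nonneg_left hentB (Real.exp_pos _).le
    _ = Real.exp (-(s * ((j : ℕ) : ℝ)) + s * ((i : ℕ) : ℝ))
          * Real.exp ((Real.exp s + Real.exp (-s) + 1) * ρ) := by
        rw [Real.exp_add]; ring

/-- Entrywise decay bound for the exponential of a tridiagonal matrix. -/
theorem exp_entry_decay_tridiagonal {n : ℕ} [NeZero n] (A : Matrix (Fin n) (Fin n) ℝ)
    (hA : ∀ j i : Fin n, 1 < (((j : ℕ) : ℤ) - ((i : ℕ) : ℤ)).natAbs → A j i = 0)
    (ρ : ℝ)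
    (hρ : ρ = (Finset.univ : Finset (Fin n × Fin n)).sup' Finset.univ_nonempty
      (fun p => |A p.1 p.2|))
    (C : ℝ) (hC : 0 < C) :
    ∀ j i : Fin n,
      |(NormedSpace.exp A) j i|
        ≤ exp (-C * ((((j : ℕ) : ℤ) - ((i : ℕ) : ℤ)).natAbs : ℝ))
            * exp ((exp C + exp (-C) + 1) * ρ) := by
  intro j i
  have hρA : ∀ a b : Fin n, |A a b| ≤ ρ := fun a b =>
    hρ ▸ Finset.le_sup' (fun p : Fin n × Fin n => |A p.1 p.2|) (Finset.mem_univ (a, b))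
  have hρ0 : 0 ≤ ρ := (abs_nonneg _).trans (hρA j j)
  have hcast : (((((j : ℕ) : ℤ) - ((i : ℕ) : ℤ)).natAbs : ℝ)) = |((j : ℕ) : ℝ) - ((i : ℕ) : ℝ)| := by
    rw [Nat.cast_natAbs]; push_cast; ring_nf
  by_cases hij : (i : ℕ) ≤ (j : ℕ)
  · have h := my_aux A hA ρ hρA hρ0 C j i
    refine h.trans_eq ?_
    congr 2
    rw [hcast, abs_of_nonneg (sub_nonneg.mpr (Nat.cast_le.mpr hij))]
    ring
  · have h := my_aux A hA ρ hρA hρ0 (-C) j i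
    refine h.trans_eq ?_
    rw [neg_neg] at h ⊢
    congr 2
    · rw [hcast, abs_of_nonpos (by
        push_cast
        have : (j : ℕ) < (i : ℕ) := Nat.lt_of_not_le hij
        nlinarith [Nat.cast_lt (α := ℝ) |>.mpr this])]
      ring
    · ring
end
end

section
/- (Vector Gronwall inequality) Let M be an n×n matrix with all entries positive, and let x(t), b(t) be continuously differentiable (resp. continuous) ℝ^n-valued functions on [0,T] satisfying the entrywise inequality dx(t)/dt ⪯ M·x(t) + b(t) for all t ∈ [0,T]. Then x(T) ⪯ e^{MT}·x(0) + ∫_0^T e^{M(T-t)}·b(t) dt, entrywise. -/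
noncomputable section
open Real MeasureTheory Set

section aux
open NormedSpace
attribute [local instance] Matrix.linftyOpNormedRing Matrix.linftyOpNormedAlgebra

def entryCLM {n : ℕ} (i j : Fin n) : Matrix (Fin n) (Fin n) ℝ →L[ℝ] ℝ :=
  { toFun := fun A => A i j, map_add' := by intros; rfl, map_smul' := by intros; rfl,
    cont := (continuous_apply j).comp (continuous_apply i) }

lemma matExp_hasDerivAt {n : ℕ} (M : Matrix (Fin n) (Fin n) ℝ) (t : ℝ) (i j : Fin n) :
    HasDerivAt (fun u : ℝ => NormedSpace.exp (u • M) i j) ((NormedSpace.exp (t • M) * M) i j) t :=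
  ((entryCLM i j).hasFDerivAt.comp_hasDerivAt t (hasDerivAt_exp_smul_const (𝕂 := ℝ) M t))

lemma matExp_entry_nonneg {n : ℕ} {M : Matrix (Fin n) (Fin n) ℝ}
    (hM : ∀ i j, 0 ≤ M i j) (i j : Fin n) : 0 ≤ NormedSpace.exp M i j := by
  have hs : HasSum (fun k : ℕ => (k.factorial : ℝ)⁻¹ • M ^ k) (NormedSpace.exp M) :=
    (exp_eq_tsum (𝕂 := ℝ) (𝔸 := Matrix (Fin n) (Fin n) ℝ)).symm ▸
      (expSeries_summable' (𝕂 := ℝ) M).hasSum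
  have h2 : HasSum (fun k : ℕ => ((k.factorial : ℝ)⁻¹ • M ^ k) i j) (NormedSpace.exp M i j) :=
    hs.map (entryCLM i j) (entryCLM i j).continuous
  refine h2.nonneg fun k => ?_
  have hpow : ∀ k : ℕ, ∀ i j, 0 ≤ (M ^ k) i j := by
    intro k
    induction k with
    | zero => intro i j; by_cases h : i = j <;> simp [pow_zero, Matrix.one_apply, h]
    | succ k ih =>
        intro i j
        rw [pow_succ, Matrix.mul_apply]
        exact Finset.sum_nonneg fun l _ => mul_nonneg (ih i l) (hM l j)
  have : ((k.factorial : ℝ)⁻¹ • M ^ k) i j = (k.factorial : ℝ)⁻¹ * (M ^ k) i j := rfl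
  rw [this]
  exact mul_nonneg (by positivity) (hpow k i j)
end aux

/-- Vector-valued Gronwall inequality: if `x' ⪯ M·x + b` entrywise on `[0,T]` with `M`
entrywise positive, then `x(T) ⪯ e^{MT}·x(0) + ∫₀ᵀ e^{M(T-t)}·b(t) dt` entrywise. -/
theorem vector_gronwall {n : ℕ} (M : Matrix (Fin n) (Fin n) ℝ)
    (hM : ∀ i j, 0 < M i j)
    (T : ℝ) (hT : 0 ≤ T)
    (x x' b : ℝ → (Fin n → ℝ))
    (hx : ∀ t ∈ Icc (0 : ℝ) T, HasDerivAt x (x' t) t)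
    (hx' : ContinuousOn x' (Icc 0 T))
    (hb : ContinuousOn b (Icc 0 T))
    (hineq : ∀ t ∈ Icc (0 : ℝ) T, ∀ i, x' t i ≤ (M.mulVec (x t) + b t) i) :
    ∀ i, x T i ≤ (NormedSpace.exp (T • M)).mulVec (x 0) i
      + ∫ t in (0 : ℝ)..T, ((NormedSpace.exp ((T - t) • M)).mulVec (b t)) i := by
  intro i
  set A : ℝ → Matrix (Fin n) (Fin n) ℝ := fun t => NormedSpace.exp ((T - t) • M) with hA
  -- entry derivative of A
  have hAderiv : ∀ t (p q : Fin n),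
      HasDerivAt (fun u => A u p q) (-((A t * M) p q)) t := by
    intro t p q
    have h1 := matExp_hasDerivAt M (T - t) p q
    have h2 : HasDerivAt (fun u : ℝ => T - u) (-1) t := by
      simpa using (hasDerivAt_id t).const_sub T
    have := HasDerivAt.comp t h1 h2
    simpa [mul_comm, Function.comp_def] using this
  have hAcont : ∀ p q, Continuous fun t => A t p q := fun p q =>
    continuous_iff_continuousAt.2 fun t => (hAderiv t p q).continuousAt
  have hAnonneg : ∀ t ∈ Icc (0 : ℝ) T, ∀ p q, 0 ≤ A t p q := by
    intro t ht p q
    refine matExp_entry_nonneg (fun p q => ?_) p q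
    have : (0:ℝ) ≤ T - t := by linarith [ht.2]
    exact smul_nonneg this (hM p q).le
  set ψ : ℝ → ℝ := fun t => ((A t).mulVec (b t)) i with hψ
  set φ : ℝ → ℝ := fun t => ((A t).mulVec (x t)) i with hφ
  have hψ_eq : ∀ t, ψ t = ∑ j, A t i j * b t j := by
    intro t; simp [hψ, Matrix.mulVec, dotProduct]
  have hφ_eq : ∀ t, φ t = ∑ j, A t i j * x t j := by
    intro t; simp [hφ, Matrix.mulVec, dotProduct]
  -- continuity of ψ and φ on Icc
  have hbj : ∀ j, ContinuousOn (fun t => b t j) (Icc (0:ℝ) T) := fun j =>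
    (continuous_apply j).comp_continuousOn hb
  have hψfun : ψ = fun t => ∑ j, A t i j * b t j := funext hψ_eq
  have hψcont : ContinuousOn ψ (Icc (0:ℝ) T) := by
    rw [hψfun]
    exact continuousOn_finset_sum _ fun j _ => ((hAcont i j).continuousOn).mul (hbj j)
  have hφcont : ContinuousOn φ (Icc (0:ℝ) T) := by
    have hxj : ∀ j, ContinuousOn (fun t => x t j) (Icc (0:ℝ) T) := by
      intro j
      intro t ht
      exact (((hasDerivAt_pi.1 (hx t ht)) j).continuousAt).continuousWithinAt
    rw [funext hφ_eq]
    exact continuousOn_finset_sum _ fun j _ => ((hAcont i j).continuousOn).mul (hxj j)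
  -- interval integrability of ψ on [0, t] for t ∈ Icc
  have hψint : ∀ t ∈ Icc (0:ℝ) T, IntervalIntegrable ψ volume 0 t := by
    intro t ht
    apply ContinuousOn.intervalIntegrable
    apply hψcont.mono
    rw [uIcc_of_le ht.1]
    exact Icc_subset_Icc le_rfl ht.2
  -- derivative of φ on Icc
  have hφderiv : ∀ t ∈ Icc (0:ℝ) T,
      HasDerivAt φ (((A t).mulVec (x' t)) i - ((A t).mulVec (M.mulVec (x t))) i) t := by
    intro t ht
    have hsum : HasDerivAt (fun u => ∑ j, A u i j * x u j)
        (∑ j, (-((A t * M) i j) * x t j + A t i j * x' t j)) t := by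
      apply HasDerivAt.fun_sum
      intro j _
      exact (hAderiv t i j).mul ((hasDerivAt_pi.1 (hx t ht)) j)
    rw [funext hφ_eq]
    convert hsum using 1
    have h1 : ((A t).mulVec (x' t)) i = ∑ j, A t i j * x' t j := by
      simp [Matrix.mulVec, dotProduct]
    have h2 : ((A t).mulVec (M.mulVec (x t))) i = ∑ j, (A t * M) i j * x t j := by
      rw [Matrix.mulVec_mulVec]
      simp [Matrix.mulVec, dotProduct]
    rw [h1, h2, ← Finset.sum_sub_distrib]
    exact Finset.sum_congr rfl fun j _ => by ring
  -- derivative bound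
  have hφle : ∀ t ∈ Icc (0:ℝ) T,
      ((A t).mulVec (x' t)) i - ((A t).mulVec (M.mulVec (x t))) i ≤ ψ t := by
    intro t ht
    have key : ((A t).mulVec (x' t)) i ≤ ((A t).mulVec (M.mulVec (x t) + b t)) i := by
      simp only [Matrix.mulVec, dotProduct]
      apply Finset.sum_le_sum
      intro j _
      exact mul_le_mul_of_nonneg_left (hineq t ht j) (hAnonneg t ht i j)
    have : ((A t).mulVec (M.mulVec (x t) + b t)) i
        = ((A t).mulVec (M.mulVec (x t))) i + ψ t := by
      rw [Matrix.mulVec_add]; rfl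
    linarith [key, this.le]
  -- h := φ - primitive of ψ is antitone on Icc
  set F : ℝ → ℝ := fun t => φ t - ∫ s in (0:ℝ)..t, ψ s with hF
  have hFcont : ContinuousOn F (Icc (0:ℝ) T) := by
    apply hφcont.sub
    have := intervalIntegral.continuousOn_primitive_interval
      (f := ψ) (a := (0:ℝ)) (b := T) (μ := volume) ?_
    · rwa [uIcc_of_le hT] at this
    · rw [uIcc_of_le hT]
      exact (hψcont.integrableOn_compact isCompact_Icc)
  have hFderiv : ∀ t ∈ Ioo (0:ℝ) T, HasDerivAt F
      (((A t).mulVec (x' t)) i - ((A t).mulVec (M.mulVec (x t))) i - ψ t) t := by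
    intro t ht
    have htIcc : t ∈ Icc (0:ℝ) T := Ioo_subset_Icc_self ht
    have hprim : HasDerivAt (fun u => ∫ s in (0:ℝ)..u, ψ s) (ψ t) t := by
      apply intervalIntegral.integral_hasDerivAt_right (hψint t htIcc)
      · exact (hψcont.mono Ioo_subset_Icc_self).stronglyMeasurableAtFilter isOpen_Ioo t ht
      · exact (hψcont.mono Ioo_subset_Icc_self).continuousAt (Ioo_mem_nhds ht.1 ht.2)
    exact (hφderiv t htIcc).sub hprim
  have hanti : AntitoneOn F (Icc (0:ℝ) T) := by
    apply antitoneOn_of_deriv_nonpos (convex_Icc 0 T) hFcont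
    · intro t ht
      rw [interior_Icc] at ht
      exact (hFderiv t ht).differentiableAt.differentiableWithinAt
    · intro t ht
      rw [interior_Icc] at ht
      rw [(hFderiv t ht).deriv]
      have := hφle t (Ioo_subset_Icc_self ht)
      linarith
  have hF0 : F 0 = (NormedSpace.exp (T • M)).mulVec (x 0) i := by
    simp [hF, hφ, hA]
  have hFT : F T = x T i - ∫ s in (0:ℝ)..T, ψ s := by
    have : φ T = x T i := by
      have : A T = 1 := by
        simp [hA, NormedSpace.exp_zero]
      rw [hφ]; simp only []
      rw [this, Matrix.one_mulVec]
    rw [hF]; simp only []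
    rw [this]
  have := hanti (left_mem_Icc.2 hT) (right_mem_Icc.2 hT) hT
  rw [hF0, hFT] at this
  have : x T i ≤ (NormedSpace.exp (T • M)).mulVec (x 0) i + ∫ s in (0:ℝ)..T, ψ s := by
    linarith
  exact this
end
end
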